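/- If w is a lattice knot (Ab(w)=0 and no proper nonempty subword has Ab = 0), then its doubling D(w) in the z-direction is again a lattice knot. -/

import Mathlib

/-- The alphabet {x, y, z, x̄, ȳ, z̄}. -/
inductive Letter : Type
  | x | y | z | xb | yb | zb
  deriving DecidableEq, Repr

/-- Formal inverse of a letter. -/
def Letter.inv : Letter → Letter
  | .x => .xb | .xb => .x | .y => .yb | .yb => .y | .z => .zb | .zb => .z

/-- Abelianization: signed occurrence counts of x, y, z. -/
def ab (w : List Letter) : ℤ × ℤ × ℤ :=
  ((w.count .x : ℤ) - (w.count .xb : ℤ),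
   (w.count .y : ℤ) - (w.count .yb : ℤ),
   (w.count .z : ℤ) - (w.count .zb : ℤ))

/-- A word is reduced if no two adjacent letters are formal inverses. -/
def Reduced (w : List Letter) : Prop :=
  List.Chain' (fun a b => b ≠ a.inv) w

/-- A lattice knot: a reduced word with `ab w = 0` such that no proper nonempty
consecutive subword has abelianization zero.  `(w.take b).drop a` is the subword
`w[a+1..b]` in 1-indexed notation. -/
def IsKnot (w : List Letter) : Prop :=
  Reduced w ∧ ab w = 0 ∧
    ∀ a b : ℕ, a < b → b ≤ w.length → ¬(a = 0 ∧ b = w.length) →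
      ab ((w.take b).drop a) ≠ 0
/-- Doubling in the x-direction: x ↦ xx, x̄ ↦ x̄x̄. -/
def Dx (w : List Letter) : List Letter :=
  w.flatMap (fun c => if c = Letter.x ∨ c = Letter.xb then [c, c] else [c])

/-- Doubling in the z-direction: z ↦ zz, z̄ ↦ z̄z̄. -/
def Dz (w : List Letter) : List Letter :=
  w.flatMap (fun c => if c = Letter.z ∨ c = Letter.zb then [c, c] else [c])
lemma Dz_nil : Dz [] = [] := rfl

lemma Dz_cons (a : Letter) (w : List Letter) :
    Dz (a :: w) = (if a = Letter.z ∨ a = Letter.zb then [a, a] else [a]) ++ Dz w := rfl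

lemma count_Dz (c : Letter) (w : List Letter) :
    (Dz w).count c = (if c = Letter.z ∨ c = Letter.zb then 2 else 1) * w.count c := by
  induction w with
  | nil => simp [Dz]
  | cons a w ih =>
    rw [Dz_cons, List.count_append, ih]
    cases a <;> cases c <;> simp [List.count_cons] <;> ring

lemma ab_Dz (s : List Letter) : ab (Dz s) = ((ab s).1, (ab s).2.1, 2 * (ab s).2.2) := by
  simp [ab, count_Dz]
  push_cast
  ring_nf

lemma ab_append (u v : List Letter) : ab (u ++ v) = ab u + ab v := by
  simp [ab, Prod.ext_iff]
  omega

lemma head?_Dz (w : List Letter) : (Dz w).head? = w.head? := by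
  cases w with
  | nil => rfl
  | cons a w => by_cases h : a = Letter.z ∨ a = Letter.zb <;> simp [Dz_cons, h]

lemma take_drop_middle (p s t : List Letter) :
    ((p ++ (s ++ t)).take (p.length + s.length)).drop p.length = s := by
  rw [List.take_append]
  simp [List.drop_append]

lemma not_self_inv (a : Letter) : a ≠ a.inv := by cases a <;> simp [Letter.inv]

lemma reduced_Dz {w : List Letter} (h : Reduced w) : Reduced (Dz w) := by
  induction w with
  | nil => exact h
  | cons a w ih =>
    rw [Reduced, show @List.Chain' Letter = @List.IsChain Letter from rfl, List.isChain_cons] at h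
    have hw := ih h.2
    rw [Reduced, Dz_cons]
    by_cases hz : a = Letter.z ∨ a = Letter.zb <;>
      [rw [if_pos hz]; rw [if_neg hz]] <;>
      refine List.IsChain.append ?_ hw ?_
    · exact List.isChain_pair.mpr (not_self_inv a)
    · intro x hx y hy
      simp at hx
      rw [head?_Dz] at hy
      subst hx
      exact h.1 y hy
    · simp
    · intro x hx y hy
      simp at hx
      rw [head?_Dz] at hy
      subst hx
      exact h.1 y hy

lemma splitDz : ∀ (w l r : List Letter), Dz w = l ++ r →
    (∃ p q, w = p ++ q ∧ l = Dz p ∧ r = Dz q) ∨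
    (∃ p q c, (c = Letter.z ∨ c = Letter.zb) ∧ w = p ++ c :: q ∧
       l = Dz p ++ [c] ∧ r = c :: Dz q) := by
  intro w
  induction w with
  | nil =>
    intro l r h
    rw [Dz_nil] at h
    obtain ⟨hl, hr⟩ := List.append_eq_nil_iff.mp h.symm
    exact Or.inl ⟨[], [], rfl, by simp [hl, Dz_nil], by simp [hr, Dz_nil]⟩
  | cons a w ih =>
    intro l r h
    cases l with
    | nil =>
        refine Or.inl ⟨[], a :: w, rfl, rfl, ?_⟩
        simp at h
        exact h.symm
    | cons d l' =>
      rw [Dz_cons] at h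
      by_cases hz : a = Letter.z ∨ a = Letter.zb
      · rw [if_pos hz] at h
        simp only [List.cons_append, List.nil_append] at h
        injection h with h1 h2
        subst h1
        cases l' with
        | nil =>
          right
          refine ⟨[], w, a, hz, rfl, by simp [Dz_nil], ?_⟩
          simpa using h2.symm
        | cons e l'' =>
          injection h2 with h3 h4
          subst h3
          rcases ih l'' r h4 with ⟨p, q, hw, hl, hr⟩ | ⟨p, q, c, hc, hw, hl, hr⟩
          · exact Or.inl ⟨a :: p, q, by rw [hw]; rfl, by rw [Dz_cons, if_pos hz, hl]; rfl, hr⟩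
          · exact Or.inr ⟨a :: p, q, c, hc, by rw [hw]; rfl, by rw [Dz_cons, if_pos hz]; simp [hl], hr⟩
      · rw [if_neg hz] at h
        simp only [List.cons_append, List.nil_append] at h
        injection h with h1 h2
        subst h1
        rcases ih l' r h2 with ⟨p, q, hw, hl, hr⟩ | ⟨p, q, c, hc, hw, hl, hr⟩
        · exact Or.inl ⟨a :: p, q, by rw [hw]; rfl, by rw [Dz_cons, if_neg hz, hl]; rfl, hr⟩
        · exact Or.inr ⟨a :: p, q, c, hc, by rw [hw]; rfl, by rw [Dz_cons, if_neg hz]; simp [hl], hr⟩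

lemma knot_sub {w p s t : List Letter} (h : IsKnot w) (hw : w = p ++ (s ++ t))
    (hs : s ≠ []) (hpt : ¬(p = [] ∧ t = [])) : ab s ≠ 0 := by
  subst hw
  have hsl : 0 < s.length := List.length_pos_iff.mpr hs
  have key := h.2.2 p.length (p.length + s.length) (by omega)
    (by simp only [List.length_append]; omega)
    (by
      simp only [List.length_append, not_and]
      intro hp hlen
      exact absurd ⟨List.length_eq_zero_iff.mp hp, List.length_eq_zero_iff.mp (by omega)⟩ hpt)
  rwa [take_drop_middle] at key

lemma reduced_cons_cons {p t : List Letter} {c d : Letter}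
    (h : Reduced (p ++ c :: d :: t)) : d ≠ c.inv := by
  induction p with
  | nil => exact (List.isChain_cons_cons.mp h).1
  | cons e p ih => exact ih (List.IsChain.tail h)

lemma ab_z : ab [Letter.z] = (0, 0, 1) := by decide
lemma ab_zb : ab [Letter.zb] = (0, 0, -1) := by decide

theorem isKnot_Dz (w : List Letter) (h : IsKnot w) : IsKnot (Dz w) := by
  obtain ⟨hred, habw, hknot⟩ := h
  have hK : IsKnot w := ⟨hred, habw, hknot⟩
  refine ⟨reduced_Dz hred, by rw [ab_Dz, habw]; rfl, ?_⟩
  intro a b hab' hble hne h0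
  obtain ⟨m, hmdef⟩ : ∃ m, ((Dz w).take b).drop a = m := ⟨_, rfl⟩
  obtain ⟨l, hl⟩ : ∃ l, (Dz w).take a = l := ⟨_, rfl⟩
  obtain ⟨r, hrdef⟩ : ∃ r, (Dz w).drop b = r := ⟨_, rfl⟩
  rw [hmdef] at h0
  have hllen : l.length = a := by rw [← hl, List.length_take]; omega
  have hrlen : r.length = (Dz w).length - b := by rw [← hrdef, List.length_drop]
  have hm_ne : m ≠ [] := by
    have hml : m.length = b - a := by
      rw [← hmdef, List.length_drop, List.length_take]; omega
    intro hnil; rw [hnil] at hml; simp at hml; omega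
  have hlm : l ++ m = (Dz w).take b := by
    rw [← hl, ← hmdef]
    conv_lhs => rw [show (Dz w).take a = ((Dz w).take b).take a by
      rw [List.take_take, min_eq_left (le_of_lt hab')]]
    exact List.take_append_drop a _
  have hsplit1 : Dz w = l ++ (m ++ r) := by
    rw [← List.append_assoc, hlm, ← hrdef, List.take_append_drop]
  have hfull : l = [] → r = [] → False := by
    intro hl0 hr0
    apply hne
    refine ⟨by rw [← hllen, hl0]; rfl, ?_⟩
    rw [hl0] at hllen
    rw [hr0] at hrlen
    simp at hllen hrlen
    omega
  rcases splitDz w l (m ++ r) hsplit1 with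
    ⟨p, q, hw, hlp, hmr⟩ | ⟨p, q, c, hc, hw, hlp, hmr⟩
  · -- boundary cut at a
    rcases splitDz q m r hmr.symm with
      ⟨s, t, hq, hms, hrt⟩ | ⟨s, t, c, hc, hq, hms, hrt⟩
    · -- boundary at b too
      have habs : ab s = 0 := by
        rw [hms, ab_Dz] at h0
        rcases hes : ab s with ⟨u, v, tz⟩
        rw [hes] at h0
        simp [Prod.ext_iff] at h0 ⊢
        omega
      have hs_ne : s ≠ [] := fun hnil => hm_ne (by rw [hms, hnil, Dz_nil])
      refine absurd habs (knot_sub hK (by rw [hw, hq]) hs_ne ?_)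
      rintro ⟨rfl, rfl⟩
      exact hfull (by rw [hlp]; rfl) (by rw [hrt]; rfl)
    · -- mid-pair at b : odd z-count
      rw [hms, ab_append, ab_Dz] at h0
      rcases hes : ab s with ⟨u, v, tz⟩
      rw [hes] at h0
      rcases hc with rfl | rfl <;>
        · simp [ab_z, ab_zb, Prod.ext_iff] at h0
          omega
  · -- mid-pair cut at a
    obtain ⟨m', rfl⟩ : ∃ m', m = c :: m' := by
      cases hme : m with
      | nil => exact absurd hme hm_ne
      | cons e m' =>
        rw [hme, List.cons_append] at hmr
        injection hmr with h1 h2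
        exact ⟨m', by rw [h1]⟩
    rw [List.cons_append] at hmr
    injection hmr with he hmr'
    rcases splitDz q m' r hmr'.symm with
      ⟨s, t, hq, hms, hrt⟩ | ⟨s, t, c', hc', hq, hms, hrt⟩
    · -- boundary at b : odd z-count
      rw [hms, show (c :: Dz s) = [c] ++ Dz s from rfl, ab_append, ab_Dz] at h0
      rcases hes : ab s with ⟨u, v, tz⟩
      rw [hes] at h0
      rcases hc with rfl | rfl <;>
        · simp [ab_z, ab_zb, Prod.ext_iff] at h0
          omega
    · -- mid-pair at both ends
      rw [hms, show (c :: (Dz s ++ [c'])) = [c] ++ Dz s ++ [c'] from rfl,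
        ab_append, ab_append, ab_Dz] at h0
      rcases hes : ab s with ⟨u, v, tz⟩
      rw [hes] at h0
      by_cases hcc : c = c'
      · -- same letter: subword s ++ [c] of w has ab = 0
        subst hcc
        have habsc : ab (s ++ [c]) = 0 := by
          rw [ab_append, hes]
          rcases hc with rfl | rfl <;>
            · simp [ab_z, ab_zb, Prod.ext_iff] at h0 ⊢
              omega
        refine absurd habsc (knot_sub hK (show w = (p ++ [c]) ++ ((s ++ [c]) ++ t) by
          rw [hw, hq]; simp) (by simp) (by simp))
      · -- opposite letters
        rcases hc with rfl | rfl <;> rcases hc' with rfl | rfl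
        · exact absurd rfl hcc
        · simp [ab_z, ab_zb, Prod.ext_iff] at h0
          cases s with
          | nil =>
            have hr := reduced_cons_cons (p := p) (t := t) (c := Letter.z) (d := Letter.zb)
              (show Reduced (p ++ Letter.z :: Letter.zb :: t) by
                rw [hw, hq] at hred; simpa using hred)
            exact hr rfl
          | cons e s =>
            have habs : ab (e :: s) = 0 := by
              rw [hes]; simp [Prod.ext_iff]; omega
            exact absurd habs (knot_sub hK (show w = (p ++ [Letter.z]) ++
              ((e :: s) ++ (Letter.zb :: t)) by rw [hw, hq]; simp) (by simp) (by simp))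
        · simp [ab_z, ab_zb, Prod.ext_iff] at h0
          cases s with
          | nil =>
            have hr := reduced_cons_cons (p := p) (t := t) (c := Letter.zb) (d := Letter.z)
              (show Reduced (p ++ Letter.zb :: Letter.z :: t) by
                rw [hw, hq] at hred; simpa using hred)
            exact hr rfl
          | cons e s =>
            have habs : ab (e :: s) = 0 := by
              rw [hes]; simp [Prod.ext_iff]; omega
            exact absurd habs (knot_sub hK (show w = (p ++ [Letter.zb]) ++
              ((e :: s) ++ (Letter.z :: t)) by rw [hw, hq]; simp) (by simp) (by simp))
        · exact absurd rfl hcc
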